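/- Let z and w be r×N complex matrices of full rank. Then μ(z) = μ(w) if and only if there exists an invertible r×r complex matrix P with z = Pw. In other words, the moment map μ is injective on the Grassmannian G(r,N) of equivalence classes [z] of full-rank matrices under z ~ w iff z = Pw for some invertible P. -/

import Mathlib

open Matrix

/-- The Fubini–Study moment map in homogeneous coordinates:
`μ(z) = zᴴ (z zᴴ)⁻¹ z`. -/
noncomputable def momentMap {r N : ℕ} (z : Matrix (Fin r) (Fin N) ℂ) :
    Matrix (Fin N) (Fin N) ℂ :=
  zᴴ * (z * zᴴ)⁻¹ * z

open scoped ComplexOrder in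
lemma gram_isUnit {r N : ℕ} {z : Matrix (Fin r) (Fin N) ℂ} (hz : z.rank = r) :
    IsUnit (z * zᴴ) := by
  rw [← Matrix.mulVec_surjective_iff_isUnit]
  have h : (z * zᴴ).rank = r := by rw [Matrix.rank_self_mul_conjTranspose, hz]
  have htop : LinearMap.range (z * zᴴ).mulVecLin = ⊤ := by
    apply Submodule.eq_top_of_finrank_eq
    rw [show Module.finrank ℂ (Fin r → ℂ) = r by simp]
    exact h
  intro v
  obtain ⟨u, hu⟩ := LinearMap.range_eq_top.mp htop v
  exact ⟨u, hu⟩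

lemma self_mul_momentMap {r N : ℕ} {z : Matrix (Fin r) (Fin N) ℂ} (hz : z.rank = r) :
    z * momentMap z = z := by
  have h := gram_isUnit hz
  rw [momentMap, ← Matrix.mul_assoc, ← Matrix.mul_assoc,
    Matrix.mul_nonsing_inv _ ((Matrix.isUnit_iff_isUnit_det _).mp h), Matrix.one_mul]

/-- For full-rank `z` and `w`, `μ(z) = μ(w)` iff `z = P w` for some
invertible `P`; i.e. `μ` is injective on the Grassmannian `G(r,N)`. -/
theorem momentMap_eq_iff_left_equiv
    (r N : ℕ) (hr : 0 < r) (hrN : r ≤ N)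
    (z w : Matrix (Fin r) (Fin N) ℂ) (hz : z.rank = r) (hw : w.rank = r) :
    momentMap z = momentMap w ↔
      ∃ P : Matrix (Fin r) (Fin r) ℂ, IsUnit P ∧ z = P * w := by
  have hzu := gram_isUnit hz
  have hwu := gram_isUnit hw
  constructor
  · intro hμ
    set P := z * wᴴ * (w * wᴴ)⁻¹ with hP
    set Q := w * zᴴ * (z * zᴴ)⁻¹ with hQ
    have hzPw : z = P * w := by
      have := self_mul_momentMap hz
      rw [hμ, momentMap, ← Matrix.mul_assoc, ← Matrix.mul_assoc] at this
      exact this.symm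
    have hwQz : w = Q * z := by
      have := self_mul_momentMap hw
      rw [← hμ, momentMap, ← Matrix.mul_assoc, ← Matrix.mul_assoc] at this
      exact this.symm
    have h1 : z * zᴴ = P * Q * (z * zᴴ) := by
      calc z * zᴴ = (P * (Q * z)) * zᴴ := by rw [← hwQz, ← hzPw]
        _ = P * Q * (z * zᴴ) := by simp only [Matrix.mul_assoc]
    have hPQ : P * Q = 1 := by
      have h3 := congrArg (fun M => M * (z * zᴴ)⁻¹) h1
      rw [Matrix.mul_assoc (P * Q),
        Matrix.mul_nonsing_inv _ ((Matrix.isUnit_iff_isUnit_det _).mp hzu),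
        Matrix.mul_one] at h3
      exact h3.symm
    have hPdet : IsUnit P.det := by
      apply IsUnit.of_mul_eq_one Q.det
      rw [← Matrix.det_mul, hPQ, Matrix.det_one]
    exact ⟨P, (Matrix.isUnit_iff_isUnit_det _).mpr hPdet, hzPw⟩
  · rintro ⟨P, hPu, rfl⟩
    have hPd := (Matrix.isUnit_iff_isUnit_det _).mp hPu
    have hPH : IsUnit Pᴴ := (Matrix.isUnit_conjTranspose P).mpr hPu
    have key : (P * w * (P * w)ᴴ)⁻¹ = Pᴴ⁻¹ * (w * wᴴ)⁻¹ * P⁻¹ := by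
      rw [Matrix.conjTranspose_mul,
        show P * w * (wᴴ * Pᴴ) = P * (w * wᴴ) * Pᴴ by simp only [Matrix.mul_assoc],
        Matrix.mul_inv_rev, Matrix.mul_inv_rev, Matrix.mul_assoc]
    rw [momentMap, momentMap, key, Matrix.conjTranspose_mul]
    have e1 : Pᴴ * Pᴴ⁻¹ = 1 :=
      Matrix.mul_nonsing_inv _ ((Matrix.isUnit_iff_isUnit_det _).mp hPH)
    have e2 : P⁻¹ * P = 1 := Matrix.nonsing_inv_mul _ hPd
    calc wᴴ * Pᴴ * (Pᴴ⁻¹ * (w * wᴴ)⁻¹ * P⁻¹) * (P * w)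
        = wᴴ * ((Pᴴ * Pᴴ⁻¹) * ((w * wᴴ)⁻¹ * ((P⁻¹ * P) * w))) := by
          simp only [Matrix.mul_assoc]
      _ = wᴴ * (w * wᴴ)⁻¹ * w := by
          rw [e1, e2, Matrix.one_mul, Matrix.one_mul, Matrix.mul_assoc]
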